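/- arXiv:2106.07746 — 3 statements merged into one kernel-verified Lean document; each statement's English description precedes it below -/
import Mathlib

section
/- Let σ, ς ∈ ℂ∖{0} with σ/ς ∉ ℝ, and let z ∈ ℂ with z ≠ mσ + nς for all (m, n) ∈ ℤ². Then the family (m, n) ↦ (z − mσ − nς)^{−2} − (mσ + nς)^{−2}, indexed by (m, n) ∈ ℤ² ∖ {(0,0)}, is summable; in particular the Weierstrass elliptic function ℘(z, σ, ς) = z^{−2} + Σ_{(m,n)∈ℤ²∖{(0,0)}} [(z − mσ − nς)^{−2} − (mσ + nς)^{−2}] is well defined for z outside the lattice ℤσ + ℤς. -/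
open Complex

noncomputable section

/-- The complex number `2πi`. -/
def twoPiI : ℂ := 2 * (Real.pi : ℂ) * Complex.I

/-- The lattice point `2πi·mτ + 2πi·n` attached to `p = (m, n) ∈ ℤ²`. -/
def latPt (τ : ℂ) (p : ℤ × ℤ) : ℂ := twoPiI * p.1 * τ + twoPiI * p.2

/-- The lattice `L_τ = 2πiτℤ + 2πiℤ ⊆ ℂ`. -/
def latticeOf (τ : ℂ) : Set ℂ := {ω : ℂ | ∃ p : ℤ × ℤ, ω = latPt τ p}

/-- `r_τ = min { |ω| : ω ∈ L_τ, ω ≠ 0 }`. -/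
def rLat (τ : ℂ) : ℝ := sInf {r : ℝ | ∃ p : ℤ × ℤ, p ≠ 0 ∧ r = ‖latPt τ p‖}

/-- The Eisenstein series `E_k(τ)`, defined by the `q`-expansion for even `k`
and equal to `0` for odd `k`. -/
def Ek (k : ℕ) (τ : ℂ) : ℂ :=
  if Even k then
    -((bernoulli k : ℚ) : ℂ) / (Nat.factorial k : ℂ) +
      (2 / (Nat.factorial (k - 1) : ℂ)) *
        ∑' n : ℕ, ((ArithmeticFunction.sigma (k - 1) (n + 1) : ℕ) : ℂ) *
          Complex.exp (twoPiI * τ) ^ (n + 1)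
  else 0

/-- The Weierstrass elliptic function `℘(z, σ, ς)` with periods `σ`, `ς`. -/
def wp (z σ ς : ℂ) : ℂ :=
  (z ^ 2)⁻¹ + ∑' p : {p : ℤ × ℤ // p ≠ 0},
    (((z - (p.1.1 : ℂ) * σ - (p.1.2 : ℂ) * ς) ^ 2)⁻¹ - (((p.1.1 : ℂ) * σ + (p.1.2 : ℂ) * ς) ^ 2)⁻¹)

/-- `P₂(τ, z) = ℘(z, 2πiτ, 2πi) + E₂(τ)`. -/
def P2 (τ z : ℂ) : ℂ := wp z (twoPiI * τ) twoPiI + Ek 2 τ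

/-- The Weierstrass zeta function of the lattice `L_τ`. -/
def wzeta (τ z : ℂ) : ℂ :=
  z⁻¹ + ∑' p : {p : ℤ × ℤ // p ≠ 0},
    ((z - latPt τ p.1)⁻¹ + (latPt τ p.1)⁻¹ + z * ((latPt τ p.1) ^ 2)⁻¹)

/-- `P₁(τ, z) = ζ(τ, z) − z·E₂(τ)`. -/
def P1 (τ z : ℂ) : ℂ := wzeta τ z - z * Ek 2 τ

/-- `P_k(τ, z) = ((−1)^{k−1}/(k−1)!)·(∂/∂z)^{k−1} P₁(τ, z)`. -/
def Pk (k : ℕ) (τ z : ℂ) : ℂ :=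
  ((-1 : ℂ) ^ (k - 1) / (Nat.factorial (k - 1) : ℂ)) * iteratedDeriv (k - 1) (P1 τ) z

/-- `C(k, l, τ) = (−1)^{k+1}·((k+l−1)!/((k−1)!(l−1)!))·E_{k+l}(τ)`. -/
def Ckl (k l : ℕ) (τ : ℂ) : ℂ :=
  (-1 : ℂ) ^ (k + 1) *
    ((Nat.factorial (k + l - 1) : ℂ) / ((Nat.factorial (k - 1) : ℂ) * (Nat.factorial (l - 1) : ℂ))) *
    Ek (k + l) τ

/-- `D(k, l, τ, z) = (−1)^{k+1}·((k+l−1)!/((k−1)!(l−1)!))·P_{k+l}(τ, z)`. -/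
def Dkl (k l : ℕ) (τ z : ℂ) : ℂ :=
  (-1 : ℂ) ^ (k + 1) *
    ((Nat.factorial (k + l - 1) : ℂ) / ((Nat.factorial (k - 1) : ℂ) * (Nat.factorial (l - 1) : ℂ))) *
    Pk (k + l) τ z

end

open NNReal

lemma aux_bound (w u ω : ℂ) (hu : u = w - ω) (hu0 : u ≠ 0) (hω0 : ω ≠ 0)
    (h2 : ‖ω‖ ≤ 2 * ‖u‖) (hw : ‖w‖ ≤ ‖ω‖) :
    ‖(u ^ 2)⁻¹ - (ω ^ 2)⁻¹‖ ≤ 12 * ‖w‖ / ‖ω‖ ^ 3 := by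
  have hid : (u ^ 2)⁻¹ - (ω ^ 2)⁻¹ = w * (2 * ω - w) / (u ^ 2 * ω ^ 2) := by
    subst hu; field_simp; ring
  rw [hid, norm_div, norm_mul, norm_mul, norm_pow, norm_pow]
  have ha : 0 < ‖u‖ := norm_pos_iff.mpr hu0
  have hb : 0 < ‖ω‖ := norm_pos_iff.mpr hω0
  have hw0 : 0 ≤ ‖w‖ := norm_nonneg _
  have h3 : ‖2 * ω - w‖ ≤ 3 * ‖ω‖ := by
    calc ‖2 * ω - w‖ ≤ ‖2 * ω‖ + ‖w‖ :=
          (norm_sub_le _ _)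
      _ ≤ 2 * ‖ω‖ + ‖ω‖ := by
          rw [norm_mul]; simp only [Complex.norm_two]; gcongr
      _ = 3 * ‖ω‖ := by ring
  rw [div_le_div_iff₀ (by positivity) (by positivity)]
  have hb2 : ‖ω‖ ^ 2 ≤ 4 * ‖u‖ ^ 2 := by nlinarith
  calc ‖w‖ * ‖2 * ω - w‖ * ‖ω‖ ^ 3
      ≤ ‖w‖ * (3 * ‖ω‖) * ‖ω‖ ^ 3 := by
        gcongr
    _ = 3 * ‖w‖ * ‖ω‖ ^ 2 * ‖ω‖ ^ 2 := by ring
    _ ≤ 3 * ‖w‖ * (4 * ‖u‖ ^ 2) * ‖ω‖ ^ 2 := by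
        gcongr
    _ = 12 * ‖w‖ * (‖u‖ ^ 2 * ‖ω‖ ^ 2) := by ring

lemma lower_bound (σ ς : ℂ) (hσ : σ ≠ 0) (hς : ς ≠ 0)
    (hratio : σ / ς ∉ Set.range ((↑) : ℝ → ℂ)) :
    ∃ K : ℝ, 0 < K ∧ ∀ x : ℝ × ℝ,
      ‖x‖ ≤ K * ‖(x.1 : ℂ) * σ + (x.2 : ℂ) * ς‖ := by
  set T : (ℝ × ℝ) →ₗ[ℝ] ℂ :=
    (LinearMap.fst ℝ ℝ ℝ).smulRight σ + (LinearMap.snd ℝ ℝ ℝ).smulRight ς with hT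
  have hTapp : ∀ x : ℝ × ℝ, T x = (x.1 : ℂ) * σ + (x.2 : ℂ) * ς := by
    intro x; simp [hT, Complex.real_smul]
  have hinj : Function.Injective T := by
    rw [← LinearMap.ker_eq_bot, LinearMap.ker_eq_bot']
    intro x hx
    rw [hTapp] at hx
    by_cases hb : x.1 = 0
    · have : (x.2 : ℂ) * ς = 0 := by simpa [hb] using hx
      have hx2 : x.2 = 0 := by
        rcases mul_eq_zero.1 this with h | h
        · exact_mod_cast h
        · exact absurd h hς
      exact Prod.ext hb hx2
    · exfalso
      apply hratio
      refine ⟨-x.2 / x.1, ?_⟩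
      have h1 : (x.1 : ℂ) ≠ 0 := by exact_mod_cast hb
      push_cast
      rw [div_eq_div_iff h1 hς]
      linear_combination -hx
  have hdim : Module.finrank ℝ (ℝ × ℝ) = Module.finrank ℝ ℂ := by
    simp [Complex.finrank_real_complex]
  let E := LinearMap.linearEquivOfInjective T hinj hdim
  have hEapp : ∀ x, E x = T x := fun x => LinearMap.linearEquivOfInjective_apply hinj hdim x
  let EL := E.toContinuousLinearEquiv
  obtain ⟨K, hanti⟩ : ∃ K : ℝ≥0, AntilipschitzWith K EL := ⟨_, EL.antilipschitz⟩
  have key : ∀ x : ℝ × ℝ, ‖x‖ ≤ K * ‖(x.1 : ℂ) * σ + (x.2 : ℂ) * ς‖ := by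
    intro x
    have := hanti.le_mul_dist x 0
    have hEL : ∀ x, EL x = T x := fun x => hEapp x
    simpa [dist_eq_norm, hEL, hEapp, hTapp, map_zero E] using this
  refine ⟨K, ?_, key⟩
  by_contra h
  push_neg at h
  have hK0 : (K : ℝ) = 0 := le_antisymm h K.2
  have := key (1, 0)
  rw [hK0] at this
  simp [Prod.norm_def] at this
  linarith [this]

lemma summable_norm_zz : Summable (fun q : ℤ × ℤ => ‖q‖ ^ (-3 : ℝ)) := by
  have h := EisensteinSeries.summable_one_div_norm_rpow (k := 3) (by norm_num)
  have := h.comp_injective (piFinTwoEquiv (fun _ => ℤ)).symm.injective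
  refine this.congr fun q => ?_
  have hnq : ‖(piFinTwoEquiv (fun _ => ℤ)).symm q‖ = ‖q‖ := by
    rw [EisensteinSeries.norm_eq_max_natAbs]
    simp [Prod.norm_def, Int.norm_eq_abs, Nat.cast_natAbs, Nat.cast_max]
  simp only [Function.comp_apply]
  rw [hnq]

/-- summability of the defining series of the Weierstrass elliptic function
`℘(z, σ, ς)` for `z` outside the lattice `ℤσ + ℤς`. -/
theorem stmt1 (σ ς : ℂ) (hσ : σ ≠ 0) (hς : ς ≠ 0)
    (hratio : σ / ς ∉ Set.range ((↑) : ℝ → ℂ))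
    (z : ℂ) (hz : ∀ p : ℤ × ℤ, z ≠ (p.1 : ℂ) * σ + (p.2 : ℂ) * ς) :
    Summable (fun p : {p : ℤ × ℤ // p ≠ 0} =>
      ((z - (p.1.1 : ℂ) * σ - (p.1.2 : ℂ) * ς) ^ 2)⁻¹ -
        (((p.1.1 : ℂ) * σ + (p.1.2 : ℂ) * ς) ^ 2)⁻¹) := by
  obtain ⟨K, hK, hlow⟩ := lower_bound σ ς hσ hς hratio
  set C : ℝ := 12 * ‖z‖ * K ^ 3 with hC
  set R : ℝ := K * (2 * ‖z‖ + 1) with hR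
  have hRpos : 0 < R := by positivity
  -- the majorant
  have hg : Summable (fun p : {p : ℤ × ℤ // p ≠ 0} => C * ‖(p : ℤ × ℤ)‖ ^ (-3 : ℝ)) :=
    ((summable_norm_zz.subtype _).mul_left C)
  apply Summable.of_norm_bounded_eventually hg
  rw [Filter.eventually_cofinite]
  -- the bad set is finite
  have hfin : {q : ℤ × ℤ | ‖q‖ < R}.Finite := by
    apply (Set.finite_Icc ((-⌈R⌉, -⌈R⌉) : ℤ × ℤ) (⌈R⌉, ⌈R⌉)).subset
    rintro ⟨m, n⟩ h
    simp only [Set.mem_setOf_eq, Prod.norm_def, Int.norm_eq_abs, max_lt_iff] at h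
    have h1 : |m| ≤ ⌈R⌉ := by
      have : (|m| : ℝ) ≤ ⌈R⌉ := by push_cast; exact le_trans h.1.le (Int.le_ceil R)
      exact_mod_cast this
    have h2 : |n| ≤ ⌈R⌉ := by
      have : (|n| : ℝ) ≤ ⌈R⌉ := by push_cast; exact le_trans h.2.le (Int.le_ceil R)
      exact_mod_cast this
    rw [abs_le] at h1 h2
    exact ⟨⟨h1.1, h2.1⟩, ⟨h1.2, h2.2⟩⟩
  apply Set.Finite.subset (hfin.preimage (Subtype.val_injective.injOn))
  intro p hp
  simp only [Set.mem_setOf_eq, Set.mem_preimage] at hp ⊢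
  by_contra hbig
  push_neg at hbig
  apply hp; clear hp
  -- main estimate
  obtain ⟨⟨m, n⟩, hp0⟩ := p
  set ω : ℂ := (m : ℂ) * σ + (n : ℂ) * ς with hω
  set u : ℂ := z - ω with huu
  simp only at hbig ⊢
  have hnorm : ‖((m, n) : ℤ × ℤ)‖ = ‖(((m : ℝ), (n : ℝ)) : ℝ × ℝ)‖ := by
    simp [Prod.norm_def, Int.norm_eq_abs, Real.norm_eq_abs]
  have hlow' : ‖((m, n) : ℤ × ℤ)‖ ≤ K * ‖ω‖ := by
    rw [hnorm]; exact hlow ((m : ℝ), (n : ℝ))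
  have hωbig : 2 * ‖z‖ + 1 ≤ ‖ω‖ := by
    have := le_trans hbig hlow'
    rw [hR] at this
    nlinarith
  have habsz : 0 ≤ ‖z‖ := norm_nonneg _
  have hω0 : ω ≠ 0 := by
    intro h; rw [h] at hωbig; simp at hωbig; linarith
  have hu0 : u ≠ 0 := by
    rw [huu, sub_ne_zero]; exact hz (m, n)
  have htri : ‖ω‖ - ‖z‖ ≤ ‖u‖ := by
    rw [huu, norm_sub_rev]
    simpa using norm_sub_norm_le ω z
  have h2 : ‖ω‖ ≤ 2 * ‖u‖ := by linarith
  have hwω : ‖z‖ ≤ ‖ω‖ := by linarith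
  have hmain := aux_bound z u ω huu hu0 hω0 h2 hwω
  have hrw : z - (m : ℂ) * σ - (n : ℂ) * ς = u := by rw [huu, hω]; ring
  rw [hrw]
  refine le_trans hmain ?_
  -- 12|z|/|ω|^3 ≤ C ‖p‖^{-3}
  have hppos : 0 < ‖((m, n) : ℤ × ℤ)‖ := lt_of_lt_of_le hRpos hbig
  have hfin3 : ‖((m, n) : ℤ × ℤ)‖ ^ (-3 : ℝ) = (‖((m, n) : ℤ × ℤ)‖ ^ 3)⁻¹ := by
    rw [show ((-3 : ℝ)) = -((3:ℕ):ℝ) by norm_num, Real.rpow_neg hppos.le, Real.rpow_natCast]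
  have hbpos : 0 < ‖ω‖ := by linarith
  calc 12 * ‖z‖ / ‖ω‖ ^ 3
      ≤ C / ‖((m, n) : ℤ × ℤ)‖ ^ 3 := by
        rw [div_le_div_iff₀ (pow_pos hbpos 3) (pow_pos hppos 3)]
        calc 12 * ‖z‖ * ‖((m, n) : ℤ × ℤ)‖ ^ 3
            ≤ 12 * ‖z‖ * (K * ‖ω‖) ^ 3 := by gcongr
          _ = C * ‖ω‖ ^ 3 := by rw [hC]; ring
    _ = C * ‖((m, n) : ℤ × ℤ)‖ ^ (-3 : ℝ) := by rw [hfin3, div_eq_mul_inv]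
end

section
/- Let τ be in the complex upper half-plane, let z ∈ ℂ with z ∉ L_τ, and let w ∈ ℂ with |w| < dist(z, L_τ). Then the series Σ_{k≥1} P_k(τ, z)·w^{k−1} converges absolutely and P₁(τ, z − w) = Σ_{k≥1} P_k(τ, z)·w^{k−1}. -/
open Complex

lemma vec_ne_zero {p : ℤ × ℤ} (hp : p ≠ 0) : (![p.1, p.2] : Fin 2 → ℤ) ≠ 0 := by
  simp only [Ne, funext_iff, not_forall]
  by_cases h1 : p.1 = 0
  · exact ⟨1, by simpa [h1] using fun h2 => hp (Prod.ext h1 h2)⟩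
  · exact ⟨0, by simpa using h1⟩

open EisensteinSeries in
lemma latPt_lower (τ : ℂ) (hτ : 0 < τ.im) (p : ℤ × ℤ) (hp : p ≠ 0) :
    2 * Real.pi * r ⟨τ, hτ⟩ * ‖(![p.1, p.2] : Fin 2 → ℤ)‖ ≤ ‖latPt τ p‖ := by
  have h := r_mul_max_le (z := ⟨τ, hτ⟩) (vec_ne_zero hp)
  have habs : ‖latPt τ p‖ = (2 * Real.pi) * ‖(p.1 : ℂ) * τ + p.2‖ := by
    have : latPt τ p = (2 * (Real.pi : ℂ) * Complex.I) * ((p.1 : ℂ) * τ + p.2) := by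
      simp only [latPt, twoPiI]; ring
    rw [this, norm_mul]
    simp [Real.pi_nonneg, abs_of_nonneg]
  rw [habs, mul_assoc]
  refine mul_le_mul_of_nonneg_left ?_ (by positivity)
  simpa [UpperHalfPlane.coe] using h

lemma latPt_pos (τ : ℂ) (hτ : 0 < τ.im) {p : ℤ × ℤ} (hp : p ≠ 0) :
    0 < ‖latPt τ p‖ := by
  refine lt_of_lt_of_le ?_ (latPt_lower τ hτ p hp)
  have : 0 < ‖(![p.1, p.2] : Fin 2 → ℤ)‖ := norm_pos_iff.mpr (vec_ne_zero hp)
  have := EisensteinSeries.r_pos (⟨τ, hτ⟩ : UpperHalfPlane)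
  positivity

open EisensteinSeries in
lemma summable_latPt_cube (τ : ℂ) (hτ : 0 < τ.im) :
    Summable fun p : {p : ℤ × ℤ // p ≠ 0} => (‖latPt τ p.1‖ ^ 3)⁻¹ := by
  set c := 2 * Real.pi * r ⟨τ, hτ⟩ with hc
  have hcpos : 0 < c := by
    have := EisensteinSeries.r_pos (⟨τ, hτ⟩ : UpperHalfPlane); positivity
  have h1 : Summable fun x : Fin 2 → ℤ => ‖x‖ ^ (-(3 : ℝ)) :=
    summable_one_div_norm_rpow (by norm_num)
  have h2 : Summable fun p : ℤ × ℤ => ‖(![p.1, p.2] : Fin 2 → ℤ)‖ ^ (-(3 : ℝ)) := by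
    have := (finTwoArrowEquiv ℤ).symm.summable_iff.mpr h1
    refine this.congr fun p => ?_
    simp [finTwoArrowEquiv, Function.comp]
  refine Summable.of_nonneg_of_le (fun p => by positivity)
    (fun p => ?_) (((h2.subtype _).mul_left ((c ^ 3)⁻¹)))
  obtain ⟨p, hp⟩ := p
  have hxpos : 0 < ‖(![p.1, p.2] : Fin 2 → ℤ)‖ := norm_pos_iff.mpr (vec_ne_zero hp)
  have hrw : ‖(![p.1, p.2] : Fin 2 → ℤ)‖ ^ (-(3 : ℝ)) = (‖(![p.1, p.2] : Fin 2 → ℤ)‖ ^ 3)⁻¹ := by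
    rw [Real.rpow_neg (norm_nonneg _), show (3 : ℝ) = ((3 : ℕ) : ℝ) by norm_num,
      Real.rpow_natCast]
  simp only [Function.comp_apply, hrw]
  rw [← mul_inv]
  refine inv_anti₀ (by positivity) ?_
  calc c ^ 3 * ‖(![p.1, p.2] : Fin 2 → ℤ)‖ ^ 3 = (c * ‖(![p.1, p.2] : Fin 2 → ℤ)‖) ^ 3 := by ring
    _ ≤ ‖latPt τ p‖ ^ 3 := by
        refine pow_le_pow_left₀ (by positivity) ?_ 3
        exact latPt_lower τ hτ p hp

lemma term_eq {u ω : ℂ} (hω : ω ≠ 0) (huω : u - ω ≠ 0) :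
    (u - ω)⁻¹ + ω⁻¹ + u * (ω ^ 2)⁻¹ = u ^ 2 / (ω ^ 2 * (u - ω)) := by
  field_simp
  ring

lemma term_bound {u ω : ℂ} {M δ : ℝ} (hM : 0 < M) (hδ : 0 < δ) (hu : ‖u‖ ≤ M)
    (hω : ω ≠ 0) (hd : δ ≤ ‖u - ω‖) :
    ‖u ^ 2 / (ω ^ 2 * (u - ω))‖ ≤
      max (2 * M ^ 2) (2 * M ^ 3 / δ) * (‖ω‖ ^ 3)⁻¹ := by
  set A := ‖ω‖ with hA'
  set B := ‖u - ω‖ with hB'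
  set C := max (2 * M ^ 2) (2 * M ^ 3 / δ) with hC'
  have hA : 0 < A := by simpa [hA'] using norm_pos_iff.mpr hω
  have hB : 0 < B := lt_of_lt_of_le hδ hd
  have hu0 : 0 ≤ ‖u‖ := norm_nonneg u
  have key : ‖u‖ ^ 2 * A ≤ C * B := by
    rcases le_total A (2 * M) with h | h
    · have h1 : 2 * M ^ 3 / δ ≤ C := le_max_right _ _
      have husq : ‖u‖ ^ 2 ≤ M ^ 2 := by nlinarith
      have h2 : ‖u‖ ^ 2 * A ≤ 2 * M ^ 3 := by nlinarith [mul_le_mul husq h hA.le (by positivity : (0:ℝ) ≤ M ^ 2)]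
      have h3 : 2 * M ^ 3 = (2 * M ^ 3 / δ) * δ := by field_simp
      calc ‖u‖ ^ 2 * A ≤ 2 * M ^ 3 := h2
        _ = (2 * M ^ 3 / δ) * δ := h3
        _ ≤ C * B := by
            refine mul_le_mul h1 hd hδ.le ?_
            exact le_trans (by positivity) h1
    · have hBge : A - M ≤ B := by
        have h4 := norm_sub_norm_le ω u
        rw [norm_sub_rev] at h4
        linarith
      have h1 : 2 * M ^ 2 ≤ C := le_max_left _ _
      have husq : ‖u‖ ^ 2 ≤ M ^ 2 := by nlinarith
      have hAM : 0 ≤ A - M := by linarith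
      have hkey : 2 * M ^ 2 * (A - M) ≤ C * B :=
        mul_le_mul h1 hBge hAM (le_trans (by positivity) h1)
      nlinarith [mul_le_mul_of_nonneg_right husq hA.le]
  rw [norm_div, norm_mul, norm_pow, norm_pow, ← hA', ← hB']
  rw [div_le_iff₀ (by positivity)]
  have hexp : C * (A ^ 3)⁻¹ * (A ^ 2 * B) = (C * B) / A := by
    field_simp
  rw [hexp, le_div_iff₀ hA]
  exact key

/-- for `z ∉ L_τ` and `|w| < dist(z, L_τ)`, the series
`Σ_{k≥1} P_k(τ, z)·w^{k−1}` converges absolutely and `P₁(τ, z − w) = Σ_{k≥1} P_k(τ, z)·w^{k−1}`. -/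
theorem stmt7 (τ : ℂ) (hτ : 0 < τ.im) (z : ℂ) (hz : z ∉ latticeOf τ) (w : ℂ)
    (hw : ‖w‖ < Metric.infDist z (latticeOf τ)) :
    Summable (fun k : ℕ => ‖Pk (k + 1) τ z * w ^ k‖) ∧
    P1 τ (z - w) = ∑' k : ℕ, Pk (k + 1) τ z * w ^ k := by
    classical
  set L := latticeOf τ with hL
  set R := Metric.infDist z L with hRdef
  have hw0 : 0 ≤ ‖w‖ := norm_nonneg w
  have hR0 : 0 < R := lt_of_le_of_lt hw0 hw
  set r' := (‖w‖ + R) / 2 with hr'def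
  have hwr' : ‖w‖ < r' := by rw [hr'def]; linarith
  have hr'R : r' < R := by rw [hr'def]; linarith
  have hr'0 : 0 < r' := lt_of_le_of_lt hw0 hwr'
  set δ := R - r' with hδdef
  have hδ : 0 < δ := by rw [hδdef]; linarith
  set M := ‖z‖ + r' with hMdef
  have hM : 0 < M := by
    have := norm_nonneg z
    rw [hMdef]; linarith
  have hdist : ∀ u ∈ Metric.ball z r', ∀ p : ℤ × ℤ, δ ≤ ‖u - latPt τ p‖ := by
    intro u hu p
    have h1 : Metric.infDist u L ≤ dist u (latPt τ p) :=
      Metric.infDist_le_dist_of_mem ⟨p, rfl⟩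
    have h2 : R ≤ Metric.infDist u L + dist z u := Metric.infDist_le_infDist_add_dist
    have h3 : dist z u < r' := by rw [dist_comm]; exact Metric.mem_ball.mp hu
    rw [Complex.dist_eq] at h1
    rw [hδdef]; linarith
  have hne : ∀ u ∈ Metric.ball z r', ∀ p : ℤ × ℤ, u - latPt τ p ≠ 0 := by
    intro u hu p h0
    have := hdist u hu p
    rw [h0, norm_zero] at this
    linarith
  have habs : ∀ u ∈ Metric.ball z r', ‖u‖ ≤ M := by
    intro u hu
    have h3 : dist u z < r' := Metric.mem_ball.mp hu
    rw [Complex.dist_eq] at h3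
    have h4 := norm_sub_norm_le u z
    rw [hMdef]; linarith
  set F : {p : ℤ × ℤ // p ≠ 0} → ℂ → ℂ :=
    fun p u => (u - latPt τ p.1)⁻¹ + (latPt τ p.1)⁻¹ + u * ((latPt τ p.1) ^ 2)⁻¹ with hFdef
  set C := max (2 * M ^ 2) (2 * M ^ 3 / δ) with hCdef
  have hFdiff : ∀ p : {p : ℤ × ℤ // p ≠ 0}, DifferentiableOn ℂ (F p) (Metric.ball z r') := by
    intro p
    refine (((differentiableOn_id.sub (differentiableOn_const _)).inv ?_).add
      (differentiableOn_const _)).add (differentiableOn_id.mul (differentiableOn_const _))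
    exact fun u hu => hne u hu p.1
  have hbound : ∀ (p : {p : ℤ × ℤ // p ≠ 0}) (u : ℂ), u ∈ Metric.ball z r' →
      ‖F p u‖ ≤ C * (‖latPt τ p.1‖ ^ 3)⁻¹ := by
    intro p u hu
    have hω : latPt τ p.1 ≠ 0 := norm_pos_iff.mp (latPt_pos τ hτ p.2)
    rw [hFdef]
    simp only
    rw [term_eq hω (hne u hu p.1)]
    exact term_bound hM hδ (habs u hu) hω (hdist u hu p.1)
  have hsum : Summable fun p : {p : ℤ × ℤ // p ≠ 0} =>
      C * (‖latPt τ p.1‖ ^ 3)⁻¹ := (summable_latPt_cube τ hτ).mul_left C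
  have hdiffsum : DifferentiableOn ℂ (fun u : ℂ => ∑' p, F p u) (Metric.ball z r') :=
    differentiableOn_tsum_of_summable_norm hsum hFdiff Metric.isOpen_ball hbound
  have hlat0 : latPt τ (0 : ℤ × ℤ) = 0 := by simp [latPt]
  have hinv : DifferentiableOn ℂ (fun u : ℂ => u⁻¹) (Metric.ball z r') := by
    refine differentiableOn_id.inv fun u hu => ?_
    have := hne u hu 0
    rw [hlat0, sub_zero] at this
    exact this
  have hP1 : DifferentiableOn ℂ (P1 τ) (Metric.ball z r') := by
    have heq : P1 τ = fun u : ℂ => (u⁻¹ + ∑' p, F p u) - u * Ek 2 τ := rfl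
    rw [heq]
    exact (hinv.add hdiffsum).sub (differentiableOn_id.mul (differentiableOn_const _))
  have hzw : z - w ∈ Metric.ball z r' := by
    rw [Metric.mem_ball, Complex.dist_eq]
    simpa using hwr'
  have H := Complex.hasSum_taylorSeries_on_ball hP1 hzw
  have key : ∀ n : ℕ, ((Nat.factorial n : ℂ))⁻¹ • (z - w - z) ^ n • iteratedDeriv n (P1 τ) z
      = Pk (n + 1) τ z * w ^ n := by
    intro n
    simp only [Pk, Nat.add_sub_cancel, smul_eq_mul]
    rw [show z - w - z = -w by ring, neg_pow]
    ring
  rw [funext key] at H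
  refine ⟨?_, H.tsum_eq.symm⟩
  have := summable_norm_iff.mpr H.summable
  exact this
end

section
/- Let τ be in the complex upper half-plane, let k ≥ 1 be an integer, let w ∈ ℂ with w ∉ L_τ, and let z ∈ ℂ with |z| < dist(w, L_τ). Then the series Σ_{l≥1} D(k, l, τ, w)·z^{l−1} converges absolutely and P_{k+1}(τ, z − w) = (1/k)·Σ_{l≥1} D(k, l, τ, w)·z^{l−1}. -/
open Complex

noncomputable section StmtAux

open Metric

lemma latPt_neg (τ : ℂ) (p : ℤ × ℤ) : latPt τ (-p) = -latPt τ p := by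
  simp only [latPt, Prod.fst_neg, Prod.snd_neg, Int.cast_neg]
  ring

lemma zero_mem_lattice (τ : ℂ) : (0 : ℂ) ∈ latticeOf τ :=
  ⟨0, by simp [latPt]⟩

lemma infDist_neg_lattice (τ : ℂ) (w : ℂ) :
    infDist (-w) (latticeOf τ) = infDist w (latticeOf τ) := by
  have h : Neg.neg '' latticeOf τ = latticeOf τ := by
    ext x
    constructor
    · rintro ⟨y, ⟨p, rfl⟩, rfl⟩; exact ⟨-p, by rw [latPt_neg]⟩
    · rintro ⟨p, rfl⟩
      exact ⟨latPt τ (-p), ⟨-p, rfl⟩, by rw [latPt_neg, neg_neg]⟩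
  conv_lhs => rw [← h]
  exact Metric.infDist_image isometry_neg

lemma twoPiI_ne_zero : twoPiI ≠ 0 := by
  simp only [twoPiI]
  refine mul_ne_zero (mul_ne_zero two_ne_zero ?_) Complex.I_ne_zero
  exact_mod_cast Complex.ofReal_ne_zero.mpr Real.pi_ne_zero

lemma latPt_eq (τ : ℂ) (p : ℤ × ℤ) : latPt τ p = twoPiI * ((p.1 : ℂ) * τ + (p.2 : ℂ)) := by
  simp only [latPt]; ring

lemma latPt_ne_zero {τ : ℂ} (hτ : 0 < τ.im) {p : ℤ × ℤ} (hp : p ≠ 0) : latPt τ p ≠ 0 := by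
  rw [latPt_eq]
  refine mul_ne_zero twoPiI_ne_zero ?_
  intro h
  have him : (p.1 : ℝ) * τ.im = 0 := by
    have := congrArg Complex.im h
    simpa using this
  have h1 : p.1 = 0 := by
    rcases mul_eq_zero.mp him with h' | h'
    · exact_mod_cast h'
    · exact absurd h' hτ.ne'
  have h2 : p.2 = 0 := by
    rw [h1] at h
    simpa using h
  exact hp (Prod.ext h1 h2)


lemma norm_twoPiI : ‖twoPiI‖ = 2 * Real.pi := by
  rw [twoPiI]
  rw [norm_mul, norm_mul, Complex.norm_I, mul_one, Complex.norm_real, Real.norm_eq_abs,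
    _root_.abs_of_nonneg Real.pi_nonneg]
  norm_num

lemma latPt_norm_ge {τ : ℂ} (hτ : 0 < τ.im) (p : ℤ × ℤ) (hp : p ≠ 0) :
    2 * Real.pi * EisensteinSeries.r ⟨τ, hτ⟩ * ‖![p.1, p.2]‖ ≤ ‖latPt τ p‖ := by
  have hx : (![p.1, p.2] : Fin 2 → ℤ) ≠ 0 := by
    intro h
    apply hp
    have h1 := congrFun h 0
    have h2 := congrFun h 1
    simp at h1 h2
    exact Prod.ext h1 h2
  have h0 := EisensteinSeries.r_mul_max_le (⟨τ, hτ⟩ : UpperHalfPlane) hx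
  have this : EisensteinSeries.r ⟨τ, hτ⟩ * ‖![p.1, p.2]‖ ≤ ‖(p.1 : ℂ) * τ + (p.2 : ℂ)‖ := by
    simpa [UpperHalfPlane.coe] using h0
  rw [latPt_eq, norm_mul, norm_twoPiI]
  calc 2 * Real.pi * EisensteinSeries.r ⟨τ, hτ⟩ * ‖![p.1, p.2]‖
      = 2 * Real.pi * (EisensteinSeries.r ⟨τ, hτ⟩ * ‖![p.1, p.2]‖) := by ring
    _ ≤ 2 * Real.pi * ‖(p.1 : ℂ) * τ + (p.2 : ℂ)‖ :=
        mul_le_mul_of_nonneg_left this (by positivity)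

lemma summable_latPt {τ : ℂ} (hτ : 0 < τ.im) :
    Summable fun p : ℤ × ℤ => (‖latPt τ p‖ ^ 3)⁻¹ := by
  set a : ℝ := 2 * Real.pi * EisensteinSeries.r ⟨τ, hτ⟩ with ha
  have ha0 : 0 < a := by
    have := EisensteinSeries.r_pos (⟨τ, hτ⟩ : UpperHalfPlane)
    positivity
  have hs : Summable fun x : Fin 2 → ℤ => ‖x‖ ^ (-(3:ℝ)) :=
    EisensteinSeries.summable_one_div_norm_rpow (by norm_num)
  have hs2 : Summable fun p : ℤ × ℤ => ‖![p.1, p.2]‖ ^ (-(3:ℝ)) := by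
    have := (finTwoArrowEquiv ℤ).symm.summable_iff.mpr hs
    refine this.congr fun p => ?_
    simp [finTwoArrowEquiv, Function.comp]
  refine Summable.of_nonneg_of_le (fun p => by positivity) (fun p => ?_) (hs2.mul_left (a^3)⁻¹)
  rcases eq_or_ne p 0 with rfl | hp
  · have : latPt τ 0 = 0 := by simp [latPt_eq]
    rw [this]
    simp
    positivity
  · have hb := latPt_norm_ge hτ p hp
    have hxpos : (0:ℝ) < ‖![p.1, p.2]‖ := by
      rw [norm_pos_iff]
      intro h
      apply hp
      have h1 := congrFun h 0
      have h2 := congrFun h 1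
      simp at h1 h2
      exact Prod.ext h1 h2
    have hrpow : ‖![p.1, p.2]‖ ^ (-(3:ℝ)) = (‖![p.1, p.2]‖ ^ (3:ℕ))⁻¹ := by
      rw [← Real.rpow_natCast ‖![p.1, p.2]‖ 3, ← Real.rpow_neg hxpos.le]
      norm_num
    rw [hrpow]
    have hlat : 0 < ‖latPt τ p‖ := lt_of_lt_of_le (by positivity) hb
    rw [← mul_inv]
    apply inv_anti₀ (by positivity)
    calc a ^ 3 * ‖![p.1, p.2]‖ ^ 3 = (a * ‖![p.1, p.2]‖) ^ 3 := by ring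
      _ ≤ ‖latPt τ p‖ ^ 3 := by
          gcongr


lemma aux_bound_s10 {a b M δ : ℝ} (hδ : 0 < δ) (hM : 0 < M) (ha : 0 < a) (hb : 0 < b)
    (h1 : δ ≤ b) (h2 : a - M ≤ b) :
    M ^ 2 * (b⁻¹ * (a ^ 2)⁻¹) ≤ M ^ 2 * (M + δ) / δ * (a ^ 3)⁻¹ := by
  have hkey : δ * a / (M + δ) ≤ b := by
    rcases le_or_gt a (M + δ) with h | h
    · calc δ * a / (M + δ) ≤ δ * (M + δ) / (M + δ) := by gcongr
        _ = δ := by field_simp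
        _ ≤ b := h1
    · have hstep : δ * a / (M + δ) ≤ a - M := by
        rw [div_le_iff₀ (by positivity)]; nlinarith
      linarith
  calc M ^ 2 * (b⁻¹ * (a ^ 2)⁻¹) ≤ M ^ 2 * ((δ * a / (M + δ))⁻¹ * (a ^ 2)⁻¹) := by
        gcongr
    _ = M ^ 2 * (M + δ) / δ * (a ^ 3)⁻¹ := by
        field_simp

lemma sep_ball {τ : ℂ} {x : ℂ} (hx : 0 < infDist x (latticeOf τ)) :
    ∀ y ∈ ball x (infDist x (latticeOf τ) / 2), ∀ ω ∈ latticeOf τ,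
      infDist x (latticeOf τ) / 2 ≤ ‖y - ω‖ := by
  intro y hy ω hω
  have h1 : infDist y (latticeOf τ) ≤ ‖y - ω‖ := by
    simpa [Complex.dist_eq] using infDist_le_dist_of_mem hω
  have h2 : infDist x (latticeOf τ) ≤ infDist y (latticeOf τ) + dist x y :=
    infDist_le_infDist_add_dist
  have h3 : dist x y < infDist x (latticeOf τ) / 2 := by
    rw [dist_comm]; exact mem_ball.mp hy
  linarith

lemma P1_diffOn {τ : ℂ} (hτ : 0 < τ.im) {x : ℂ} (hx : 0 < infDist x (latticeOf τ)) :
    DifferentiableOn ℂ (P1 τ) (ball x (infDist x (latticeOf τ) / 2)) := by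
  set d := infDist x (latticeOf τ) with hd
  set δ := d / 2 with hδdef
  have hδ : 0 < δ := by positivity
  set M := ‖x‖ + δ + 1 with hMdef
  have hM0 : 0 < M := by positivity
  have hynorm : ∀ y ∈ ball x δ, ‖y‖ ≤ M := by
    intro y hy
    have : dist y x < δ := mem_ball.mp hy
    have h := norm_sub_norm_le y x
    rw [← dist_eq_norm] at h
    simp only [hMdef]
    linarith
  have hne : ∀ y ∈ ball x δ, ∀ p : ℤ × ℤ, y - latPt τ p ≠ 0 := by
    intro y hy p h
    have := sep_ball hx y hy (latPt τ p) ⟨p, rfl⟩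
    rw [h, norm_zero] at this
    linarith
  have hy0 : ∀ y ∈ ball x δ, y ≠ 0 := by
    intro y hy h
    have := sep_ball hx y hy 0 (zero_mem_lattice τ)
    rw [h, sub_zero, norm_zero] at this
    linarith
  have hsum : DifferentiableOn ℂ
      (fun y => ∑' p : {p : ℤ × ℤ // p ≠ 0},
        ((y - latPt τ p.1)⁻¹ + (latPt τ p.1)⁻¹ + y * ((latPt τ p.1) ^ 2)⁻¹)) (ball x δ) := by
    refine differentiableOn_tsum_of_summable_norm
      (u := fun p : {p : ℤ × ℤ // p ≠ 0} => M ^ 2 * (M + δ) / δ * (‖latPt τ p.1‖ ^ 3)⁻¹)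
      ?_ ?_ isOpen_ball ?_
    · exact ((summable_latPt hτ).subtype _).mul_left _
    · intro p
      refine DifferentiableOn.add (DifferentiableOn.add ?_ (differentiableOn_const _)) ?_
      · exact DifferentiableOn.inv (differentiableOn_id.sub (differentiableOn_const _))
          (fun y hy => hne y hy p.1)
      · exact differentiableOn_id.mul (differentiableOn_const _)
    · intro p y hy
      have hω0 : latPt τ p.1 ≠ 0 := latPt_ne_zero hτ p.2
      have hb : δ ≤ ‖y - latPt τ p.1‖ := sep_ball hx y hy (latPt τ p.1) ⟨p.1, rfl⟩
      have hbne : y - latPt τ p.1 ≠ 0 := hne y hy p.1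
      have hval : (y - latPt τ p.1)⁻¹ + (latPt τ p.1)⁻¹ + y * ((latPt τ p.1) ^ 2)⁻¹
          = y ^ 2 * ((y - latPt τ p.1)⁻¹ * ((latPt τ p.1) ^ 2)⁻¹) := by
        field_simp
        ring
      rw [hval, norm_mul, norm_mul, norm_inv, norm_inv, norm_pow, norm_pow]
      have hMy : ‖y‖ ^ 2 ≤ M ^ 2 := by
        gcongr
        exact hynorm y hy
      have hωM : ‖latPt τ p.1‖ - M ≤ ‖y - latPt τ p.1‖ := by
        have h := norm_sub_norm_le (latPt τ p.1) y
        rw [norm_sub_rev (latPt τ p.1) y] at h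
        have := hynorm y hy
        linarith
      calc ‖y‖ ^ 2 * (‖y - latPt τ p.1‖⁻¹ * (‖latPt τ p.1‖ ^ 2)⁻¹)
          ≤ M ^ 2 * (‖y - latPt τ p.1‖⁻¹ * (‖latPt τ p.1‖ ^ 2)⁻¹) := by
            gcongr
        _ ≤ M ^ 2 * (M + δ) / δ * (‖latPt τ p.1‖ ^ 3)⁻¹ :=
            aux_bound_s10 hδ hM0 (norm_pos_iff.mpr hω0) (lt_of_lt_of_le hδ hb) hb hωM
  have : DifferentiableOn ℂ (fun y : ℂ => (y⁻¹ + ∑' p : {p : ℤ × ℤ // p ≠ 0},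
        ((y - latPt τ p.1)⁻¹ + (latPt τ p.1)⁻¹ + y * ((latPt τ p.1) ^ 2)⁻¹)) - y * Ek 2 τ)
      (ball x δ) := by
    refine DifferentiableOn.sub (DifferentiableOn.add ?_ hsum) ?_
    · exact DifferentiableOn.inv differentiableOn_id hy0
    · exact differentiableOn_id.mul (differentiableOn_const _)
  exact this

lemma P1_analytic {τ : ℂ} (hτ : 0 < τ.im) :
    AnalyticOnNhd ℂ (P1 τ) {x : ℂ | 0 < infDist x (latticeOf τ)} := by
  have hopen : IsOpen {x : ℂ | 0 < infDist x (latticeOf τ)} :=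
    isOpen_lt continuous_const (continuous_infDist_pt _)
  refine DifferentiableOn.analyticOnNhd ?_ hopen
  intro x hx
  have hx' : 0 < infDist x (latticeOf τ) := hx
  exact ((P1_diffOn hτ hx').differentiableAt
    (Metric.ball_mem_nhds x (by positivity))).differentiableWithinAt

lemma analyticOnNhd_iteratedDeriv {f : ℂ → ℂ} {s : Set ℂ} (hf : AnalyticOnNhd ℂ f s) (n : ℕ) :
    AnalyticOnNhd ℂ (iteratedDeriv n f) s := by
  induction n with
  | zero => simpa using hf
  | succ n ih =>
    rw [iteratedDeriv_succ]
    exact ih.deriv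

lemma iteratedDeriv_iteratedDeriv (f : ℂ → ℂ) (m n : ℕ) :
    iteratedDeriv n (iteratedDeriv m f) = iteratedDeriv (m + n) f := by
  induction n with
  | zero => simp
  | succ n ih =>
    rw [iteratedDeriv_succ, ih, ← iteratedDeriv_succ]
    rfl

def negEquiv : {p : ℤ × ℤ // p ≠ 0} ≃ {p : ℤ × ℤ // p ≠ 0} :=
  (Equiv.neg (ℤ × ℤ)).subtypeEquiv (fun p => by simp)

lemma P1_neg (τ : ℂ) (y : ℂ) : P1 τ (-y) = -P1 τ y := by
  have hts : ∑' p : {p : ℤ × ℤ // p ≠ 0},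
      ((-y - latPt τ p.1)⁻¹ + (latPt τ p.1)⁻¹ + (-y) * ((latPt τ p.1) ^ 2)⁻¹)
      = -∑' p : {p : ℤ × ℤ // p ≠ 0},
      ((y - latPt τ p.1)⁻¹ + (latPt τ p.1)⁻¹ + y * ((latPt τ p.1) ^ 2)⁻¹) := by
    rw [← tsum_neg]
    refine (Equiv.tsum_eq negEquiv _).symm.trans (tsum_congr fun p => ?_)
    have he : latPt τ ((negEquiv p) : ℤ × ℤ) = -latPt τ p.1 := by
      show latPt τ (-(p : ℤ × ℤ)) = _
      simp only [latPt, Prod.fst_neg, Prod.snd_neg, Int.cast_neg]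
      ring
    rw [he]
    have h1 : -y - -latPt τ p.1 = -(y - latPt τ p.1) := by ring
    rw [h1, inv_neg, inv_neg, neg_sq]
    ring
  simp only [P1, wzeta, hts, inv_neg]
  ring

lemma iteratedDeriv_P1_neg (τ : ℂ) (n : ℕ) (w : ℂ) :
    iteratedDeriv n (P1 τ) (-w) = (-1 : ℂ) ^ (n + 1) * iteratedDeriv n (P1 τ) w := by
  have h1 := iteratedDeriv_comp_neg n (P1 τ) w
  have h2 : (fun x => P1 τ (-x)) = -(P1 τ) := funext (P1_neg τ)
  rw [h2, iteratedDeriv_neg, smul_eq_mul] at h1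
  have hpow : (-1 : ℂ) ^ n * (-1 : ℂ) ^ n = 1 := by
    rw [← mul_pow]; norm_num
  calc iteratedDeriv n (P1 τ) (-w)
      = ((-1 : ℂ) ^ n * (-1 : ℂ) ^ n) * iteratedDeriv n (P1 τ) (-w) := by rw [hpow, one_mul]
    _ = (-1 : ℂ) ^ n * ((-1 : ℂ) ^ n * iteratedDeriv n (P1 τ) (-w)) := by ring
    _ = (-1 : ℂ) ^ n * (-iteratedDeriv n (P1 τ) w) := by rw [← h1]
    _ = (-1 : ℂ) ^ (n + 1) * iteratedDeriv n (P1 τ) w := by rw [pow_succ]; ring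


end StmtAux

/-- for `k ≥ 1`, `w ∉ L_τ` and `|z| < dist(w, L_τ)`, the series
`Σ_{l≥1} D(k, l, τ, w)·z^{l−1}` converges absolutely and
`P_{k+1}(τ, z − w) = (1/k)·Σ_{l≥1} D(k, l, τ, w)·z^{l−1}`. -/
theorem stmt10 (τ : ℂ) (hτ : 0 < τ.im) (k : ℕ) (hk : 1 ≤ k) (w : ℂ)
    (hw : w ∉ latticeOf τ) (z : ℂ) (hz : ‖z‖ < Metric.infDist w (latticeOf τ)) :
    Summable (fun l : ℕ => ‖Dkl k (l + 1) τ w * z ^ l‖) ∧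
    Pk (k + 1) τ (z - w) = (1 / (k : ℂ)) * ∑' l : ℕ, Dkl k (l + 1) τ w * z ^ l := by
  obtain ⟨m, rfl⟩ : ∃ m, k = m + 1 := ⟨k - 1, (Nat.succ_pred_eq_of_pos hk).symm⟩
  have hz0 : (0 : ℝ) ≤ ‖z‖ := norm_nonneg z
  have hR0 : 0 < Metric.infDist w (latticeOf τ) := lt_of_le_of_lt hz0 hz
  set R := Metric.infDist w (latticeOf τ) with hRdef
  set ρ := (‖z‖ + R) / 2 with hρdef
  have hzρ : ‖z‖ < ρ := by rw [hρdef]; linarith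
  have hρR : ρ < R := by rw [hρdef]; linarith
  have hρ0 : 0 < ρ := lt_of_le_of_lt hz0 hzρ
  have hwR : Metric.infDist (-w) (latticeOf τ) = R := infDist_neg_lattice τ w
  have hball : Metric.ball (-w) ρ ⊆ {x : ℂ | 0 < Metric.infDist x (latticeOf τ)} := by
    intro x hx
    have h1 : Metric.infDist (-w) (latticeOf τ) ≤ Metric.infDist x (latticeOf τ) + dist (-w) x :=
      Metric.infDist_le_infDist_add_dist
    have h2 : dist x (-w) < ρ := Metric.mem_ball.mp hx
    rw [dist_comm] at h2
    show 0 < Metric.infDist x (latticeOf τ)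
    rw [hwR] at h1
    linarith
  set g := iteratedDeriv (m + 1) (P1 τ) with hg
  have hgd : DifferentiableOn ℂ g (Metric.ball (-w) ρ) :=
    ((analyticOnNhd_iteratedDeriv (P1_analytic hτ) (m + 1)).mono hball).differentiableOn
  have hmem : z - w ∈ Metric.ball (-w) ρ := by
    rw [Metric.mem_ball, Complex.dist_eq]
    have h : z - w - -w = z := by ring
    rw [h]; exact hzρ
  have hTS := Complex.hasSum_taylorSeries_on_ball hgd hmem
  have hzz : z - w - -w = z := by ring
  rw [hzz] at hTS
  set c : ℂ := (-1 : ℂ) ^ (m + 1) / (Nat.factorial m : ℂ) with hc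
  have hA : ∀ l : ℕ, iteratedDeriv l g (-w)
      = (-1 : ℂ) ^ (m + 1 + l + 1) * iteratedDeriv (m + 1 + l) (P1 τ) w := by
    intro l
    rw [hg, iteratedDeriv_iteratedDeriv]
    exact iteratedDeriv_P1_neg τ (m + 1 + l) w
  have hfacm : ((Nat.factorial m : ℕ) : ℂ) ≠ 0 := Nat.cast_ne_zero.mpr (Nat.factorial_ne_zero m)
  have hterm : ∀ l : ℕ, Dkl (m + 1) (l + 1) τ w * z ^ l
      = c * ((Nat.factorial l : ℂ)⁻¹ • z ^ l • iteratedDeriv l g (-w)) := by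
    intro l
    rw [hA l]
    simp only [Dkl, Pk, smul_eq_mul]
    rw [show m + 1 + (l + 1) - 1 = m + 1 + l from by omega,
        show m + 1 - 1 = m from by omega,
        show l + 1 - 1 = l from by omega]
    have hfl : ((Nat.factorial l : ℕ) : ℂ) ≠ 0 := Nat.cast_ne_zero.mpr (Nat.factorial_ne_zero l)
    have hfml : ((Nat.factorial (m + 1 + l) : ℕ) : ℂ) ≠ 0 :=
      Nat.cast_ne_zero.mpr (Nat.factorial_ne_zero _)
    rw [hc]
    field_simp
    ring
  have hnormz : ∀ (t : ℂ) (l : ℕ), ‖(Nat.factorial l : ℂ)⁻¹ • t ^ l • iteratedDeriv l g (-w)‖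
      = ((Nat.factorial l : ℝ))⁻¹ * (‖t‖ ^ l * ‖iteratedDeriv l g (-w)‖) := by
    intro t l
    rw [norm_smul, norm_smul, norm_inv, norm_pow]
    simp [Complex.norm_natCast]
  constructor
  · set ρ₁ := (‖z‖ + ρ) / 2 with hρ₁def
    have hzρ₁ : ‖z‖ < ρ₁ := by rw [hρ₁def]; linarith
    have hρ₁ρ : ρ₁ < ρ := by rw [hρ₁def]; linarith
    have hρ₁0 : 0 < ρ₁ := lt_of_le_of_lt hz0 hzρ₁
    have hmem1 : -w + (ρ₁ : ℂ) ∈ Metric.ball (-w) ρ := by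
      rw [Metric.mem_ball, Complex.dist_eq]
      have h : -w + (ρ₁ : ℂ) - -w = (ρ₁ : ℂ) := by ring
      rw [h, Complex.norm_real, Real.norm_eq_abs, abs_of_pos hρ₁0]
      exact hρ₁ρ
    have hTS1 := Complex.hasSum_taylorSeries_on_ball hgd hmem1
    have hzz1 : -w + (ρ₁ : ℂ) - -w = (ρ₁ : ℂ) := by ring
    rw [hzz1] at hTS1
    have htend : Filter.Tendsto
        (fun l : ℕ => ‖(Nat.factorial l : ℂ)⁻¹ • (ρ₁ : ℂ) ^ l • iteratedDeriv l g (-w)‖)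
        Filter.atTop (nhds 0) := by
      have h := hTS1.summable.tendsto_atTop_zero
      simpa using h.norm
    obtain ⟨C, hC⟩ := htend.bddAbove_range
    have hCle : ∀ l : ℕ, ‖(Nat.factorial l : ℂ)⁻¹ • (ρ₁ : ℂ) ^ l • iteratedDeriv l g (-w)‖ ≤ C :=
      fun l => hC (Set.mem_range_self l)
    set q := ‖z‖ / ρ₁ with hq
    have hq0 : 0 ≤ q := by positivity
    have hq1 : q < 1 := by rw [hq, div_lt_one hρ₁0]; exact hzρ₁
    refine Summable.of_nonneg_of_le (fun l => norm_nonneg _) (fun l => ?_)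
      ((summable_geometric_of_lt_one hq0 hq1).mul_left (‖c‖ * C))
    rw [hterm l, norm_mul, hnormz z l]
    have h1 : ‖((ρ₁ : ℝ) : ℂ)‖ = ρ₁ := by
      rw [Complex.norm_real, Real.norm_eq_abs, abs_of_pos hρ₁0]
    have h2 := hCle l
    rw [hnormz (ρ₁ : ℂ) l, h1] at h2
    have hzq : ‖z‖ ^ l = ρ₁ ^ l * q ^ l := by
      rw [← mul_pow, hq]
      congr 1
      field_simp
    have key : ((Nat.factorial l : ℝ))⁻¹ * (‖z‖ ^ l * ‖iteratedDeriv l g (-w)‖) ≤ C * q ^ l := by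
      calc ((Nat.factorial l : ℝ))⁻¹ * (‖z‖ ^ l * ‖iteratedDeriv l g (-w)‖)
          = ((Nat.factorial l : ℝ))⁻¹ * (ρ₁ ^ l * ‖iteratedDeriv l g (-w)‖) * q ^ l := by
            rw [hzq]; ring
        _ ≤ C * q ^ l := mul_le_mul_of_nonneg_right h2 (pow_nonneg hq0 l)
    calc ‖c‖ * (((Nat.factorial l : ℝ))⁻¹ * (‖z‖ ^ l * ‖iteratedDeriv l g (-w)‖))
        ≤ ‖c‖ * (C * q ^ l) := mul_le_mul_of_nonneg_left key (norm_nonneg c)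
      _ = ‖c‖ * C * q ^ l := by ring
  · have hfun : (fun l : ℕ => Dkl (m + 1) (l + 1) τ w * z ^ l)
        = fun l : ℕ => c * ((Nat.factorial l : ℂ)⁻¹ • z ^ l • iteratedDeriv l g (-w)) :=
      funext hterm
    have hsum2 : HasSum (fun l : ℕ => Dkl (m + 1) (l + 1) τ w * z ^ l) (c * g (z - w)) := by
      rw [hfun]
      exact hTS.mul_left c
    rw [hsum2.tsum_eq]
    simp only [Pk]
    rw [show m + 1 + 1 - 1 = m + 1 from by omega, ← hg]
    have hfm1 : ((Nat.factorial (m + 1) : ℕ) : ℂ) = ((m : ℂ) + 1) * (Nat.factorial m : ℂ) := by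
      rw [Nat.factorial_succ]
      push_cast
      ring
    have hm1 : ((m : ℂ) + 1) ≠ 0 := by
      have : ((m + 1 : ℕ) : ℂ) ≠ 0 := Nat.cast_ne_zero.mpr (Nat.succ_ne_zero m)
      push_cast at this
      exact this
    rw [hc, hfm1]
    push_cast
    field_simp
end
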